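/- Let I = !![-3, 1, 0; 1, -5, 1; 0, 1, -2] ∈ Matrix (Fin 3) (Fin 3) ℤ. Consider the set S of vectors K : Fin 3 → ℤ with K 0 ∈ {-1, 1, 3}, K 1 ∈ {-3, -1, 1, 3, 5}, and K 2 ∈ {0, 2}. Then S has exactly 30 elements, and exactly five elements K of S satisfy K ⬝ᵥ I⁻¹.mulVec K = -3 (computed in ℚ with the rational inverse I⁻¹), namely (1,3,0), (-1,-3,0), (3,-1,0), (-1,1,2), and (1,-3,2). -/

import Mathlib

open Matrix

/-- For the intersection form `I` of the plumbing `C_{5,3}` with weights `-3, -5, -2`,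
the box of characteristic covectors `K` with `K 0 ∈ {-1,1,3}`, `K 1 ∈ {-3,-1,1,3,5}`,
`K 2 ∈ {0,2}` has exactly `30` elements, and exactly five of them have square `-3`
(computed in `ℚ` with the rational inverse of `I`), namely `(1,3,0)`, `(-1,-3,0)`,
`(3,-1,0)`, `(-1,1,2)`, and `(1,-3,2)`. -/
theorem c53_characteristic_vectors :
    let I : Matrix (Fin 3) (Fin 3) ℤ := !![-3, 1, 0; 1, -5, 1; 0, 1, -2]
    let S : Set (Fin 3 → ℤ) :=
      {K | K 0 ∈ ({-1, 1, 3} : Set ℤ) ∧ K 1 ∈ ({-3, -1, 1, 3, 5} : Set ℤ) ∧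
        K 2 ∈ ({0, 2} : Set ℤ)}
    S.ncard = 30 ∧
      {K ∈ S | (fun i => ((K i : ℤ) : ℚ)) ⬝ᵥ
          (I.map ((↑) : ℤ → ℚ))⁻¹.mulVec (fun i => ((K i : ℤ) : ℚ)) = -3}
        = ({![1, 3, 0], ![-1, -3, 0], ![3, -1, 0], ![-1, 1, 2], ![1, -3, 2]} :
            Set (Fin 3 → ℤ)) := by
  intro I S
  have hmap : I.map ((↑) : ℤ → ℚ) = !![(-3:ℚ), 1, 0; 1, -5, 1; 0, 1, -2] := by
    ext i j
    fin_cases i <;> fin_cases j <;> rfl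
  have hinv : (!![(-3:ℚ), 1, 0; 1, -5, 1; 0, 1, -2])⁻¹ =
      !![(-9/25 : ℚ), -2/25, -1/25; -2/25, -6/25, -3/25; -1/25, -3/25, -14/25] := by
    apply inv_eq_right_inv
    norm_num [Matrix.mul_fin_three]
    rw [Matrix.one_fin_three]
  constructor
  · have hS : S = ↑(Fintype.piFinset
        ![({-1, 1, 3} : Finset ℤ), {-3, -1, 1, 3, 5}, {0, 2}]) := by
      ext K
      simp only [S, Set.mem_setOf_eq, Finset.coe_sort_coe, Finset.mem_coe,
        Fintype.mem_piFinset, Set.mem_insert_iff, Set.mem_singleton_iff]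
      constructor
      · rintro ⟨h0, h1, h2⟩ i
        fin_cases i <;> simp <;> tauto
      · intro h
        refine ⟨?_, ?_, ?_⟩
        · have := h 0; simpa using this
        · have := h 1; simpa using this
        · have := h 2; simpa using this
    rw [hS, Set.ncard_coe_finset]
    decide
  · ext K
    simp only [Set.mem_setOf_eq, Set.mem_insert_iff, Set.mem_singleton_iff, S]
    constructor
    · rintro ⟨⟨h0, h1, h2⟩, hq⟩
      have hK : K = ![K 0, K 1, K 2] := by
        funext i; fin_cases i <;> rfl
      rcases h0 with h0 | h0 | h0 <;> rcases h1 with h1 | h1 | h1 | h1 | h1 <;>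
        rcases h2 with h2 | h2 <;>
        first
          | (rw [hK, h0, h1, h2]; simp; done)
          | (norm_num [hmap, hinv, dotProduct, Matrix.mulVec, Fin.sum_univ_three,
              Matrix.cons_val_two, h0, h1, h2] at hq)
    · rintro (rfl | rfl | rfl | rfl | rfl) <;>
        refine ⟨⟨by norm_num, by norm_num, by norm_num [Matrix.cons_val_two]⟩,
          by norm_num [hmap, hinv, dotProduct, Matrix.mulVec, Fin.sum_univ_three, Matrix.cons_val_two]⟩
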